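/- Let d ≥ 1, X = [0,1]^d, and let f : X → ℝ be Lipschitz continuous with (minimal) Lipschitz constant |f|₁ < ∞ (with respect to the Euclidean norm). Then for every temperature ε > 0, the maximum M_f = max_{x∈X} f(x) satisfies |M_f − ε·L_{f/ε}| ≤ ε·d·log(1 + 3·d^{−1/2}·|f|₁/ε); more precisely, M_f − ε·d·log(1 + 3·d^{−1/2}·|f|₁/ε) ≤ ε·L_{f/ε} ≤ M_f. -/

import Mathlib

open MeasureTheory Real

noncomputable section

/-- The unit cube `[0,1]^d` in `ℝ^d`. -/
def cube (d : ℕ) : Set (Fin d → ℝ) := Set.Icc 0 1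

/-- The partition function `Z_f = ∫_X exp(f(x)) dx`. -/
def partZ {d : ℕ} (f : (Fin d → ℝ) → ℝ) : ℝ := ∫ x in cube d, Real.exp (f x)

/-- The log-partition function `L_f = log Z_f`. -/
def logPart {d : ℕ} (f : (Fin d → ℝ) → ℝ) : ℝ := Real.log (partZ f)

/-- The Gibbs measure `P_f` with density `exp(f(x))/Z_f` w.r.t. Lebesgue measure on the cube. -/
def gibbs {d : ℕ} (f : (Fin d → ℝ) → ℝ) : Measure (Fin d → ℝ) :=
  (volume.restrict (cube d)).withDensity fun x => ENNReal.ofReal (Real.exp (f x) / partZ f)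

/-- Essential supremum norm `‖h‖_∞` over the cube. -/
def supNormOn {d : ℕ} (h : (Fin d → ℝ) → ℝ) : ℝ :=
  essSup (fun x => |h x|) (volume.restrict (cube d))

/-- Total variation distance between two measures: `sup_A |P(A) − Q(A)|`. -/
def DTV {α : Type*} [MeasurableSpace α] (P Q : Measure α) : ℝ :=
  ⨆ A : {A : Set α // MeasurableSet A}, |(P A.1).toReal - (Q A.1).toReal|

/-- `f` is bounded on the cube. -/
def BddOnCube {d : ℕ} (f : (Fin d → ℝ) → ℝ) : Prop := ∃ C, ∀ x ∈ cube d, |f x| ≤ C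

lemma aux_log_ge (c : ℝ) (hc : 0 ≤ c) (h3 : c ≤ 3) : c / 3 ≤ Real.log (1 + c) := by
  have h4 : (1:ℝ) ≤ Real.log 4 := by
    rw [Real.le_log_iff_exp_le (by norm_num)]
    have := Real.exp_one_lt_d9
    linarith
  have hcc : ConcaveOn ℝ (Set.Ioi 0) Real.log := strictConcaveOn_log_Ioi.concaveOn
  have ha : (0:ℝ) ≤ 1 - c/3 := by linarith
  have hb : (0:ℝ) ≤ c/3 := by linarith
  have hab : (1 - c/3) + c/3 = 1 := by ring
  have hconc := hcc.2 (Set.mem_Ioi.2 one_pos) (Set.mem_Ioi.2 (by norm_num : (0:ℝ) < 4)) ha hb hab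
  simp only [smul_eq_mul, Real.log_one, mul_one] at hconc
  have he : 1 - c / 3 + c / 3 * 4 = 1 + c := by ring
  rw [he] at hconc
  nlinarith

/-- Optimization limit, Lemma 1.1, first part.
If `f` is Lipschitz on `X = [0,1]^d` with (minimal) Lipschitz constant `K` w.r.t. the
Euclidean norm, `M` is the maximum of `f` on `X`, and `ε > 0`, then
`|M − ε L_{f/ε}| ≤ ε d log(1 + 3 d^{−1/2} K / ε)`; more precisely,
`M − ε d log(1 + 3 d^{−1/2} K / ε) ≤ ε L_{f/ε} ≤ M`. -/
theorem optimization_limit (d : ℕ) (hd : 1 ≤ d) (f : (Fin d → ℝ) → ℝ)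
    (K : ℝ) (hK : 0 ≤ K)
    (hLip : ∀ x ∈ cube d, ∀ y ∈ cube d,
      |f x - f y| ≤ K * Real.sqrt (∑ i, (x i - y i) ^ 2))
    (M : ℝ) (hM : IsGreatest (f '' cube d) M)
    (ε : ℝ) (hε : 0 < ε) :
    |M - ε * logPart (fun x => f x / ε)| ≤ ε * d * Real.log (1 + 3 * K / (Real.sqrt d * ε)) ∧
    M - ε * d * Real.log (1 + 3 * K / (Real.sqrt d * ε)) ≤ ε * logPart (fun x => f x / ε) ∧
    ε * logPart (fun x => f x / ε) ≤ M := by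
  have hd0 : (0:ℝ) < d := by exact_mod_cast hd
  set s : ℝ := Real.sqrt d with hs_def
  have hs0 : 0 < s := Real.sqrt_pos.2 hd0
  have hs2 : s * s = d := Real.mul_self_sqrt hd0.le
  set c : ℝ := 3 * K / (s * ε) with hc_def
  have hc0 : 0 ≤ c := by positivity
  -- continuity and integrability
  have hcont : ContinuousOn f (cube d) := by
    have hlip : LipschitzOnWith (Real.toNNReal (K * s)) f (cube d) := by
      apply LipschitzOnWith.of_dist_le_mul
      intro x hx y hy
      have h1 : ∀ i, (x i - y i)^2 ≤ (dist x y)^2 := by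
        intro i
        have : |x i - y i| ≤ dist x y := by
          rw [← Real.dist_eq]; exact dist_le_pi_dist x y i
        calc (x i - y i)^2 = |x i - y i|^2 := (sq_abs _).symm
          _ ≤ (dist x y)^2 := by nlinarith [abs_nonneg (x i - y i)]
      have hsum : ∑ i, (x i - y i)^2 ≤ (d:ℝ) * (dist x y)^2 := by
        calc ∑ i, (x i - y i)^2 ≤ ∑ _i : Fin d, (dist x y)^2 :=
              Finset.sum_le_sum fun i _ => h1 i
          _ = (d:ℝ) * (dist x y)^2 := by simp [Finset.sum_const, mul_comm]
      have hsqrt : Real.sqrt (∑ i, (x i - y i)^2) ≤ s * dist x y := by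
        calc Real.sqrt (∑ i, (x i - y i)^2) ≤ Real.sqrt ((d:ℝ) * (dist x y)^2) :=
              Real.sqrt_le_sqrt hsum
          _ = s * dist x y := by
              rw [Real.sqrt_mul (le_of_lt hd0), Real.sqrt_sq dist_nonneg]
      calc dist (f x) (f y) = |f x - f y| := Real.dist_eq _ _
        _ ≤ K * Real.sqrt (∑ i, (x i - y i)^2) := hLip x hx y hy
        _ ≤ K * (s * dist x y) := mul_le_mul_of_nonneg_left hsqrt hK
        _ = (Real.toNNReal (K * s) : ℝ) * dist x y := by
            rw [Real.coe_toNNReal _ (by positivity)]; ring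
    exact hlip.continuousOn
  have hcube_meas : MeasurableSet (cube d) := measurableSet_Icc
  have hcompact : IsCompact (cube d) := isCompact_Icc
  have hcont2 : ContinuousOn (fun x => Real.exp (f x / ε)) (cube d) :=
    Real.continuous_exp.comp_continuousOn (hcont.div_const ε)
  have hZint : IntegrableOn (fun x => Real.exp (f x / ε)) (cube d) :=
    hcont2.integrableOn_compact hcompact
  have hvol : volume (cube d) = 1 := by
    rw [cube, Real.volume_Icc_pi]
    simp
  -- upper bound
  have hfle : ∀ x ∈ cube d, f x ≤ M := fun x hx => hM.2 ⟨x, hx, rfl⟩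
  have hZle : partZ (fun x => f x / ε) ≤ Real.exp (M / ε) := by
    have h1 : ∫ x in cube d, Real.exp (f x / ε) ≤ ∫ _x in cube d, Real.exp (M / ε) := by
      apply setIntegral_mono_on hZint
        ((integrableOn_const_iff).2 (Or.inr (by rw [hvol]; exact ENNReal.one_lt_top))) hcube_meas
      intro x hx
      have : f x / ε ≤ M / ε := div_le_div_of_nonneg_right (hfle x hx) hε.le
      exact Real.exp_le_exp.2 this
    rw [setIntegral_const, measureReal_def, hvol] at h1
    simpa [partZ] using h1
  -- choose δ with the key arithmetic property
  have hex : ∃ δ : ℝ, 0 < δ ∧ δ ≤ 1 ∧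
      (d:ℝ) * c / 3 * δ - (d:ℝ) * Real.log δ ≤ (d:ℝ) * Real.log (1 + c) := by
    rcases le_or_gt c 3 with h | h
    · refine ⟨1, one_pos, le_refl 1, ?_⟩
      have h1 := mul_le_mul_of_nonneg_left (aux_log_ge c hc0 h) hd0.le
      rw [Real.log_one]
      ring_nf at h1 ⊢
      linarith
    · refine ⟨3 / c, by positivity, by rw [div_le_one (by linarith)]; linarith, ?_⟩
      have he1 : (1:ℝ) ≤ Real.log 3 := by
        rw [Real.le_log_iff_exp_le (by norm_num)]
        have := Real.exp_one_lt_d9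
        linarith
      have hlogc : Real.log c ≤ Real.log (1 + c) := Real.log_le_log (by linarith) (by linarith)
      have hlog3c : Real.log (3 / c) = Real.log 3 - Real.log c :=
        Real.log_div (by norm_num) (by positivity)
      have hmul : (d:ℝ) * c / 3 * (3 / c) = d := by field_simp
      rw [hmul, hlog3c]
      have hfin : (1:ℝ) - Real.log 3 + Real.log c ≤ Real.log (1 + c) := by linarith
      have h2 := mul_le_mul_of_nonneg_left hfin hd0.le
      ring_nf at h2 ⊢
      linarith
  obtain ⟨δ, hδ0, hδ1, hkey⟩ := hex
  -- maximizer and subcube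
  obtain ⟨x₀, hx₀, hfx₀⟩ := hM.1
  have hx₀' : x₀ ∈ Set.Icc (0 : Fin d → ℝ) 1 := hx₀
  set a : Fin d → ℝ := fun i => min (x₀ i) (1 - δ) with ha_def
  set b : Fin d → ℝ := fun i => a i + δ with hb_def
  have hab : a ≤ b := fun i => by simp [hb_def]; linarith
  have hsub : Set.Icc a b ⊆ cube d := by
    intro x hx
    constructor
    · intro i
      have hx00 : (0:ℝ) ≤ x₀ i := hx₀'.1 i
      have h1 : 0 ≤ a i := le_min hx00 (by linarith)
      exact le_trans h1 (hx.1 i)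
    · intro i
      have h2 : b i ≤ 1 := by
        have : a i ≤ 1 - δ := min_le_right _ _
        simp only [hb_def]; linarith
      exact le_trans (hx.2 i) h2
  have hx₀mem : x₀ ∈ Set.Icc a b := by
    constructor
    · intro i; exact min_le_left _ _
    · intro i
      have hx01 : x₀ i ≤ 1 := hx₀'.2 i
      rcases le_or_gt (x₀ i) (1 - δ) with h | h
      · show x₀ i ≤ a i + δ
        rw [ha_def]; simp only [min_eq_left h]; linarith
      · show x₀ i ≤ a i + δ
        rw [ha_def]; simp only [min_eq_right h.le]; linarith
  -- f is close to M on the subcube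
  have hflow : ∀ x ∈ Set.Icc a b, M - K * (s * δ) ≤ f x := by
    intro x hx
    have hsum : ∑ i, (x₀ i - x i)^2 ≤ (d:ℝ) * δ^2 := by
      calc ∑ i, (x₀ i - x i)^2 ≤ ∑ _i : Fin d, δ^2 := by
            apply Finset.sum_le_sum
            intro i _
            have h1 : a i ≤ x i := hx.1 i
            have h2 : x i ≤ a i + δ := hx.2 i
            have h3 : a i ≤ x₀ i := hx₀mem.1 i
            have h4 : x₀ i ≤ a i + δ := hx₀mem.2 i
            nlinarith
        _ = (d:ℝ) * δ^2 := by simp [Finset.sum_const, mul_comm]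
    have hsqrt : Real.sqrt (∑ i, (x₀ i - x i)^2) ≤ s * δ := by
      calc Real.sqrt (∑ i, (x₀ i - x i)^2) ≤ Real.sqrt ((d:ℝ) * δ^2) := Real.sqrt_le_sqrt hsum
        _ = s * δ := by rw [Real.sqrt_mul (le_of_lt hd0), Real.sqrt_sq hδ0.le]
    have h5 := hLip x₀ hx₀ x (hsub hx)
    have h6 : f x₀ - f x ≤ K * (s * δ) :=
      le_trans (le_abs_self _) (le_trans h5 (mul_le_mul_of_nonneg_left hsqrt hK))
    rw [hfx₀] at h6; linarith
  -- lower bound on Z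
  have hvab : (volume (Set.Icc a b)).toReal = δ ^ d := by
    rw [Real.volume_Icc_pi_toReal hab]
    simp [hb_def]
  have hZge : δ ^ d * Real.exp ((M - K * (s * δ)) / ε) ≤ partZ (fun x => f x / ε) := by
    have h1 : ∫ _x in Set.Icc a b, Real.exp ((M - K * (s * δ)) / ε)
        ≤ ∫ x in Set.Icc a b, Real.exp (f x / ε) := by
      apply setIntegral_mono_on
        ((integrableOn_const_iff).2 (Or.inr (measure_lt_top_of_subset hsub ?fin)))
        (hZint.mono_set hsub) measurableSet_Icc
      case fin => rw [hvol]; exact ENNReal.one_ne_top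
      intro x hx
      exact Real.exp_le_exp.2 (div_le_div_of_nonneg_right (hflow x hx) hε.le)
    have h2 : ∫ x in Set.Icc a b, Real.exp (f x / ε) ≤ partZ (fun x => f x / ε) :=
      setIntegral_mono_set hZint (Filter.Eventually.of_forall fun x => (Real.exp_pos _).le)
        (HasSubset.Subset.eventuallyLE hsub)
    rw [setIntegral_const, measureReal_def, hvab, smul_eq_mul] at h1
    exact le_trans h1 h2
  have hZ0 : 0 < partZ (fun x => f x / ε) :=
    lt_of_lt_of_le (by positivity) hZge
  -- log bounds
  have hLle : logPart (fun x => f x / ε) ≤ M / ε := by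
    rw [logPart, Real.log_le_iff_le_exp hZ0]
    exact hZle
  have hLge : (d:ℝ) * Real.log δ + (M - K * (s * δ)) / ε ≤ logPart (fun x => f x / ε) := by
    have h := Real.log_le_log (by positivity) hZge
    rwa [Real.log_mul (by positivity) (Real.exp_ne_zero _), Real.log_pow, Real.log_exp] at h
  -- put things together
  have hKs : K * s = ε * ((d:ℝ) * c / 3) := by
    rw [hc_def]
    field_simp
    linear_combination K * hs2
  have hεL_le : ε * logPart (fun x => f x / ε) ≤ M := by
    have h := mul_le_mul_of_nonneg_left hLle hε.le
    rw [mul_div_cancel₀ M hε.ne'] at h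
    exact h
  have h3 : K * (s * δ) = ε * ((d:ℝ) * c / 3 * δ) := by rw [← mul_assoc, hKs]; ring
  have h4 : ε * ((d:ℝ) * c / 3 * δ) - ε * ((d:ℝ) * Real.log δ)
      ≤ ε * ((d:ℝ) * Real.log (1 + c)) := by
    have h := mul_le_mul_of_nonneg_left hkey hε.le
    ring_nf at h ⊢
    linarith
  have h1 := mul_le_mul_of_nonneg_left hLge hε.le
  have h2 : ε * ((d:ℝ) * Real.log δ + (M - K * (s * δ)) / ε)
      = ε * ((d:ℝ) * Real.log δ) + (M - K * (s * δ)) := by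
    rw [mul_add, mul_div_cancel₀ _ hε.ne']
  rw [h2] at h1
  have hassoc : ε * (d:ℝ) * Real.log (1 + c) = ε * ((d:ℝ) * Real.log (1 + c)) := mul_assoc _ _ _
  have hB0 : 0 ≤ Real.log (1 + c) := Real.log_nonneg (by linarith)
  have hB0' : 0 ≤ ε * ((d:ℝ) * Real.log (1 + c)) := by positivity
  have hεL_ge : M - ε * ((d:ℝ) * Real.log (1 + c)) ≤ ε * logPart (fun x => f x / ε) := by
    linarith
  refine ⟨?_, ?_, hεL_le⟩
  · rw [abs_le, hassoc]
    constructor <;> linarith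
  · rw [hassoc]; linarith
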